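/- Let S = ℚ[x, y, z] and let M ⊆ S^4 be the submodule of tuples (g_0, g_1, g_2, g_3) satisfying: (x + y − z) divides g_0 − g_1, (2x − y + z) divides g_0 − g_2, (x − 2y − z) divides g_0 − g_3, x divides g_1 − g_2, (x − y) divides g_2 − g_3, and y divides g_1 − g_3. Then there exists K such that for all k ≥ K, the ℚ-vector space of elements of M all of whose components are homogeneous of degree k has dimension exactly 2k² + 2; i.e., the Hilbert polynomial of M is 2k² + 2. -/

import Mathlib

open MvPolynomial

/-- The ring `S = ℚ[x, y, z]`. -/
abbrev S : Type := MvPolynomial (Fin 3) ℚ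

/-- The Billera–Rose submodule of `S^N` cut out by a list of conditions
`(ℓ, a, b)`, each requiring `ℓ ∣ g_a - g_b`. -/
noncomputable def splineBR {N : ℕ} (conds : List (S × Fin N × Fin N)) :
    Submodule S (Fin N → S) where
  carrier := {g | ∀ c ∈ conds, c.1 ∣ g c.2.1 - g c.2.2}
  add_mem' := by
    intro a b ha hb c hc
    simpa [sub_add_sub_comm] using dvd_add (ha c hc) (hb c hc)
  zero_mem' := by
    intro c hc
    simp
  smul_mem' := by
    intro r g hg c hc
    simpa [smul_eq_mul, mul_sub] using (hg c hc).mul_left r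

/-- The spline module `M = C^0(Σ) ⊆ S^4` of the cone `Σ` over the symmetric
triangle-in-triangle complex: tuples `(g_0, g_1, g_2, g_3)` with
`x+y-z ∣ g_0-g_1`, `2x-y+z ∣ g_0-g_2`, `x-2y-z ∣ g_0-g_3`, `x ∣ g_1-g_2`,
`x-y ∣ g_2-g_3`, `y ∣ g_1-g_3`. -/
noncomputable def M : Submodule S (Fin 4 → S) :=
  splineBR [(X 0 + X 1 - X 2, 0, 1), (2 * X 0 - X 1 + X 2, 0, 2),
    (X 0 - 2 * X 1 - X 2, 0, 3), (X 0, 1, 2), (X 0 - X 1, 2, 3), (X 1, 1, 3)]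

/-- The `ℚ`-vector space of elements of `M` all of whose components are homogeneous of
degree `k` (or zero). -/
noncomputable def MHomPart (k : ℕ) : Submodule ℚ (Fin 4 → S) :=
  (Submodule.restrictScalars ℚ M) ⊓
    Submodule.pi Set.univ (fun _ : Fin 4 => homogeneousSubmodule (Fin 3) ℚ k)

/-! ### Auxiliary material -/

section Aux

/-- dimension of the space of homogeneous polynomials -/
noncomputable instance fintypeDeg (n : ℕ) : Fintype {d : Fin 3 →₀ ℕ // d.degree = n} :=
  Fintype.ofEquiv (Sym (Fin 3) n) <|
    (Sym.equivNatSum (Fin 3) n).trans (Equiv.subtypeEquiv (Equiv.refl _) (by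
      intro d; simp [Finsupp.degree_apply, Finsupp.sum]))

noncomputable instance fintypeDeg' (n : ℕ) : Fintype ↥{d : Fin 3 →₀ ℕ | d.degree = n} :=
  fintypeDeg n

lemma card_deg (n : ℕ) : Fintype.card {d : Fin 3 →₀ ℕ // d.degree = n} = (n+2).choose 2 := by
  rw [← Fintype.card_congr ((Sym.equivNatSum (Fin 3) n).trans (Equiv.subtypeEquiv (Equiv.refl _) (by
      intro d; simp [Finsupp.degree_apply, Finsupp.sum])))]
  rw [Sym.card_sym_eq_choose]
  rw [show Fintype.card (Fin 3) + n - 1 = n + 2 by simp; omega]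
  rw [← Nat.choose_symm (by omega : n ≤ n + 2)]
  congr 1
  omega

instance finiteH (n : ℕ) : Module.Finite ℚ (homogeneousSubmodule (Fin 3) ℚ n) := by
  have hEq : homogeneousSubmodule (Fin 3) ℚ n = restrictSupport ℚ {d | d.degree = n} :=
    homogeneousSubmodule_eq_finsupp_supported (Fin 3) ℚ n
  rw [hEq]
  exact Module.Finite.of_basis (basisRestrictSupport ℚ _)

lemma finrank_H (n : ℕ) : Module.finrank ℚ (homogeneousSubmodule (Fin 3) ℚ n) = (n+2).choose 2 := by
  have hEq : homogeneousSubmodule (Fin 3) ℚ n = restrictSupport ℚ {d | d.degree = n} :=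
    homogeneousSubmodule_eq_finsupp_supported (Fin 3) ℚ n
  rw [hEq, Module.finrank_eq_card_basis (basisRestrictSupport ℚ {d : Fin 3 →₀ ℕ | d.degree = n}),
    ← card_deg n]
  rfl

/-- homogeneous division: if a homogeneous `l` divides a homogeneous `f` then the
cofactor can be chosen homogeneous. -/
lemma homog_div {l f : S} {d k : ℕ} (hl : l.IsHomogeneous d) (hf : f.IsHomogeneous k)
    (h : l ∣ f) : ∃ c : S, c.IsHomogeneous (k - d) ∧ f = l * c := by
  obtain ⟨c, rfl⟩ := h
  refine ⟨homogeneousComponent (k - d) c, homogeneousComponent_isHomogeneous _ _, ?_⟩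
  by_cases hl0 : l = 0
  · simp [hl0]
  by_cases hc0 : c = 0
  · simp [hc0]
  have hf0 : l * c ≠ 0 := mul_ne_zero hl0 hc0
  set N := c.totalDegree + 1 with hN
  have key : l * c = ∑ i ∈ Finset.range N,
      if d + i = k then l * homogeneousComponent i c else 0 := by
    have e1 : homogeneousComponent k (l*c) = l*c := by
      rw [homogeneousComponent_of_mem (hf : l * c ∈ homogeneousSubmodule (Fin 3) ℚ k)]; simp
    calc l * c = homogeneousComponent k (l*c) := e1.symm
      _ = homogeneousComponent k (∑ i ∈ Finset.range N, l * homogeneousComponent i c) := by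
          rw [← Finset.mul_sum, sum_homogeneousComponent]
      _ = ∑ i ∈ Finset.range N, homogeneousComponent k (l * homogeneousComponent i c) :=
          map_sum _ _ _
      _ = ∑ i ∈ Finset.range N, if d + i = k then l * homogeneousComponent i c else 0 := by
          refine Finset.sum_congr rfl fun i _ => ?_
          rw [homogeneousComponent_of_mem (hl.mul (homogeneousComponent_isHomogeneous i c) :
            l * homogeneousComponent i c ∈ homogeneousSubmodule (Fin 3) ℚ (d + i))]
          simp [eq_comm]
  by_cases hin : d ≤ k ∧ k - d ∈ Finset.range N
  · rw [key]
    have hr := hin.2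
    rw [Finset.sum_congr rfl
      (fun i hi => show (if d + i = k then l * homogeneousComponent i c else 0)
          = if i = k - d then l * homogeneousComponent i c else 0 by
        simp only [show (d + i = k) ↔ (i = k - d) from by omega])]
    rw [Finset.sum_ite_eq' (Finset.range N) (k-d)
      (fun i => l * homogeneousComponent i c), if_pos hr]
  · exfalso
    apply hf0
    rw [key]
    refine Finset.sum_eq_zero fun i hi => ?_
    rw [if_neg]
    intro h'
    have hiN : i < N := Finset.mem_range.mp hi
    exact hin ⟨by omega, Finset.mem_range.mpr (by omega)⟩

/-! primality of the relevant linear forms -/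

lemma primeX0 : Prime (X 0 : S) := by
  rw [← MulEquiv.prime_iff (finSuccEquiv ℚ 2).toMulEquiv]
  simpa [finSuccEquiv_apply] using Polynomial.prime_X

lemma primeX1 : Prime (X 1 : S) := by
  have := (MulEquiv.prime_iff (renameEquiv ℚ (Equiv.swap (0:Fin 3) 1)).toMulEquiv (p := (X 0:S))).mpr primeX0
  simpa using this

lemma primeXsub : Prime (X 0 - X 1 : S) := by
  rw [← MulEquiv.prime_iff (finSuccEquiv ℚ 2).toMulEquiv]
  have : (finSuccEquiv ℚ 2).toMulEquiv (X 0 - X 1 : S) = Polynomial.X - Polynomial.C (X 0) := by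
    simp [finSuccEquiv_apply]; rfl
  rw [this]
  exact Polynomial.prime_X_sub_C _

/-! non-divisibilities and non-vanishing -/

lemma ndvd1 : ¬ (X 0 : S) ∣ (X 1 - X 2) := fun ⟨c, hc⟩ => by
  simpa using congrArg (eval ![(0:ℚ),1,0]) hc
lemma ndvd2 : ¬ (X 1 : S) ∣ (X 0 - X 2) := fun ⟨c, hc⟩ => by
  simpa using congrArg (eval ![(1:ℚ),0,0]) hc
lemma ndvd3 : ¬ (X 0 - X 1 : S) ∣ (X 0 + X 2) := fun ⟨c, hc⟩ => by
  simpa using congrArg (eval ![(0:ℚ),0,1]) hc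
lemma ndvd4 : ¬ (X 0 - X 1 : S) ∣ (X 0 : S) := fun ⟨c, hc⟩ => by
  simpa using congrArg (eval ![(1:ℚ),1,0]) hc

lemma l1ne : (X 0 + X 1 - X 2 : S) ≠ 0 := fun h => by
  simpa using congrArg (eval ![(1:ℚ),0,0]) h
lemma l2ne : (2 * X 0 - X 1 + X 2 : S) ≠ 0 := fun h => by
  simpa using congrArg (eval ![(1:ℚ),0,0]) h
lemma l3ne : (X 0 - 2 * X 1 - X 2 : S) ≠ 0 := fun h => by
  simpa using congrArg (eval ![(1:ℚ),0,0]) h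
lemma x0ne : (X 0 : S) ≠ 0 := fun h => by
  simpa using congrArg (eval ![(1:ℚ),0,0]) h
lemma x1ne : (X 1 : S) ≠ 0 := fun h => by
  simpa using congrArg (eval ![(0:ℚ),1,0]) h
lemma xsubne : (X 0 - X 1 : S) ≠ 0 := fun h => by
  simpa using congrArg (eval ![(1:ℚ),0,0]) h

/-! homogeneity of the linear forms -/

lemma homl1 : (X 0 + X 1 - X 2 : S).IsHomogeneous 1 :=
  ((isHomogeneous_X ℚ 0).add (isHomogeneous_X ℚ 1)).sub (isHomogeneous_X ℚ 2)
lemma hom2X0 : (2 * X 0 : S).IsHomogeneous 1 := by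
  have := (isHomogeneous_X ℚ (0 : Fin 3)).C_mul (2:ℚ)
  simpa [show (C (2:ℚ) : S) = 2 by simp [map_ofNat]] using this
lemma homl2 : (2 * X 0 - X 1 + X 2 : S).IsHomogeneous 1 :=
  (hom2X0.sub (isHomogeneous_X ℚ 1)).add (isHomogeneous_X ℚ 2)
lemma hom2X1 : (2 * X 1 : S).IsHomogeneous 1 := by
  have := (isHomogeneous_X ℚ (1 : Fin 3)).C_mul (2:ℚ)
  simpa [show (C (2:ℚ) : S) = 2 by simp [map_ofNat]] using this
lemma homl3 : (X 0 - 2 * X 1 - X 2 : S).IsHomogeneous 1 :=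
  ((isHomogeneous_X ℚ 0).sub hom2X1).sub (isHomogeneous_X ℚ 2)

/-! ### The free basis of `M` -/

noncomputable abbrev bl1 : S := X 0 + X 1 - X 2
noncomputable abbrev bl2 : S := 2 * X 0 - X 1 + X 2
noncomputable abbrev bl3 : S := X 0 - 2 * X 1 - X 2

noncomputable def e0 : Fin 4 → S := ![1, 1, 1, 1]
noncomputable def e1 : Fin 4 → S := ![0, bl1, -bl2, bl3]
noncomputable def e2 : Fin 4 → S := ![0, 0, X 0 * bl2, -(X 1 * bl3)]
noncomputable def e3 : Fin 4 → S := ![0, 0, 0, X 1 * (X 0 - X 1) * bl3]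

@[simp] lemma e0_0 : e0 0 = 1 := rfl
@[simp] lemma e0_1 : e0 1 = 1 := rfl
@[simp] lemma e0_2 : e0 2 = 1 := rfl
@[simp] lemma e0_3 : e0 3 = 1 := rfl
@[simp] lemma e1_0 : e1 0 = 0 := rfl
@[simp] lemma e1_1 : e1 1 = bl1 := rfl
@[simp] lemma e1_2 : e1 2 = -bl2 := rfl
@[simp] lemma e1_3 : e1 3 = bl3 := rfl
@[simp] lemma e2_0 : e2 0 = 0 := rfl
@[simp] lemma e2_1 : e2 1 = 0 := rfl
@[simp] lemma e2_2 : e2 2 = X 0 * bl2 := rfl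
@[simp] lemma e2_3 : e2 3 = -(X 1 * bl3) := rfl
@[simp] lemma e3_0 : e3 0 = 0 := rfl
@[simp] lemma e3_1 : e3 1 = 0 := rfl
@[simp] lemma e3_2 : e3 2 = 0 := rfl
@[simp] lemma e3_3 : e3 3 = X 1 * (X 0 - X 1) * bl3 := rfl

lemma mem_M (g : Fin 4 → S) : g ∈ M ↔
    (bl1 ∣ g 0 - g 1) ∧ (bl2 ∣ g 0 - g 2) ∧ (bl3 ∣ g 0 - g 3) ∧
    (X 0 ∣ g 1 - g 2) ∧ (X 0 - X 1 ∣ g 2 - g 3) ∧ (X 1 ∣ g 1 - g 3) := by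
  constructor
  · intro h
    exact ⟨h (bl1, 0, 1) (by simp [M]), h (bl2, 0, 2) (by simp [M]), h (bl3, 0, 3) (by simp [M]),
      h (X 0, 1, 2) (by simp [M]), h (X 0 - X 1, 2, 3) (by simp [M]), h (X 1, 1, 3) (by simp [M])⟩
  · intro ⟨h1, h2, h3, h4, h5, h6⟩ c hc
    simp [M] at hc
    rcases hc with h|h|h|h|h|h <;> rw [h] <;> assumption

lemma e0_mem : e0 ∈ M := by
  rw [mem_M]
  refine ⟨?_,?_,?_,?_,?_,?_⟩ <;> simp
lemma e1_mem : e1 ∈ M := by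
  rw [mem_M]
  simp only [e1_0, e1_1, e1_2, e1_3]
  refine ⟨⟨-1, by ring⟩, ⟨1, by ring⟩, ⟨-1, by ring⟩,
    ⟨3, by ring⟩, ⟨-3, by ring⟩, ⟨3, by ring⟩⟩
lemma e2_mem : e2 ∈ M := by
  rw [mem_M]
  simp only [e2_0, e2_1, e2_2, e2_3]
  refine ⟨⟨0, by ring⟩, ⟨-X 0, by ring⟩, ⟨X 1, by ring⟩,
    ⟨-bl2, by ring⟩, ⟨2 * X 0 + 2 * X 1 + X 2, by ring⟩,
    ⟨bl3, by ring⟩⟩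
lemma e3_mem : e3 ∈ M := by
  rw [mem_M]
  simp only [e3_0, e3_1, e3_2, e3_3]
  refine ⟨⟨0, by ring⟩, ⟨0, by ring⟩, ⟨-(X 1 * (X 0 - X 1)), by ring⟩,
    ⟨0, by ring⟩, ⟨-(X 1 * bl3), by ring⟩, ⟨-((X 0 - X 1) * bl3), by ring⟩⟩

lemma e0_hom : ∀ j, (e0 j).IsHomogeneous 0 := by
  intro j; fin_cases j <;> exact isHomogeneous_one (Fin 3) ℚ
lemma e1_hom : ∀ j, (e1 j).IsHomogeneous 1 := by
  intro j
  fin_cases j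
  exacts [isHomogeneous_zero _ _ _, homl1, homl2.neg, homl3]
lemma e2_hom : ∀ j, (e2 j).IsHomogeneous 2 := by
  intro j
  fin_cases j
  exacts [isHomogeneous_zero _ _ _, isHomogeneous_zero _ _ _,
    (isHomogeneous_X ℚ 0).mul homl2, ((isHomogeneous_X ℚ 1).mul homl3).neg]
lemma e3_hom : ∀ j, (e3 j).IsHomogeneous 3 := by
  intro j
  fin_cases j
  exacts [isHomogeneous_zero _ _ _, isHomogeneous_zero _ _ _, isHomogeneous_zero _ _ _,
    ((isHomogeneous_X ℚ 1).mul ((isHomogeneous_X ℚ 0).sub (isHomogeneous_X ℚ 1))).mul homl3]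

/-! ### The parametrization map -/

noncomputable abbrev H (n : ℕ) : Submodule ℚ S := homogeneousSubmodule (Fin 3) ℚ n

noncomputable def Phi (m : ℕ) : (H (m+3) × H (m+2) × H (m+1) × H m) →ₗ[ℚ] (Fin 4 → S) where
  toFun f := (f.1 : S) • e0 + (f.2.1 : S) • e1 + (f.2.2.1 : S) • e2 + (f.2.2.2 : S) • e3
  map_add' f g := by
    simp only [Prod.fst_add, Prod.snd_add, Submodule.coe_add, add_smul]
    abel
  map_smul' q f := by
    simp only [Prod.smul_fst, Prod.smul_snd, Submodule.coe_smul, smul_assoc, smul_add,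
      RingHom.id_apply]

lemma Phi_mem (m : ℕ) (f : H (m+3) × H (m+2) × H (m+1) × H m) : Phi m f ∈ MHomPart (m+3) := by
  rw [MHomPart, Submodule.mem_inf]
  constructor
  · refine Submodule.add_mem _ (Submodule.add_mem _ (Submodule.add_mem _ ?_ ?_) ?_) ?_
    · exact Submodule.smul_mem M _ e0_mem
    · exact Submodule.smul_mem M _ e1_mem
    · exact Submodule.smul_mem M _ e2_mem
    · exact Submodule.smul_mem M _ e3_mem
  · rw [Submodule.mem_pi]
    intro j _
    show ((f.1 : S) * e0 j + (f.2.1 : S) * e1 j + (f.2.2.1 : S) * e2 j + (f.2.2.2 : S) * e3 j)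
      ∈ homogeneousSubmodule (Fin 3) ℚ (m+3)
    refine Submodule.add_mem _ (Submodule.add_mem _ (Submodule.add_mem _ ?_ ?_) ?_) ?_
    · exact f.1.2.mul (e0_hom j)
    · exact f.2.1.2.mul (e1_hom j)
    · exact f.2.2.1.2.mul (e2_hom j)
    · exact f.2.2.2.2.mul (e3_hom j)

lemma Phi_inj (m : ℕ) (f : H (m+3) × H (m+2) × H (m+1) × H m) (h : Phi m f = 0) : f = 0 := by
  obtain ⟨⟨f0, hf0⟩, ⟨f1, hf1⟩, ⟨f2, hf2⟩, ⟨f3, hf3⟩⟩ := f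
  have h0 : f0 * e0 0 + f1 * e1 0 + f2 * e2 0 + f3 * e3 0 = 0 := congrFun h 0
  have h1 : f0 * e0 1 + f1 * e1 1 + f2 * e2 1 + f3 * e3 1 = 0 := congrFun h 1
  have h2 : f0 * e0 2 + f1 * e1 2 + f2 * e2 2 + f3 * e3 2 = 0 := congrFun h 2
  have h3 : f0 * e0 3 + f1 * e1 3 + f2 * e2 3 + f3 * e3 3 = 0 := congrFun h 3
  simp only [e0_0, e0_1, e0_2, e0_3, e1_0, e1_1, e1_2, e1_3, e2_0, e2_1, e2_2, e2_3,
    e3_0, e3_1, e3_2, e3_3, mul_one, mul_zero, add_zero, zero_add, mul_neg] at h0 h1 h2 h3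
  subst h0
  have h1' : f1 = 0 := by
    rcases mul_eq_zero.mp (show bl1 * f1 = 0 by linear_combination h1) with h | h
    · exact absurd h l1ne
    · exact h
  subst h1'
  have h2' : f2 = 0 := by
    rcases mul_eq_zero.mp (show (X 0 * bl2) * f2 = 0 by linear_combination h2) with h | h
    · exact absurd h (mul_ne_zero x0ne l2ne)
    · exact h
  subst h2'
  have h3' : f3 = 0 := by
    rcases mul_eq_zero.mp (show (X 1 * (X 0 - X 1) * bl3) * f3 = 0 by linear_combination h3)
      with h | h
    · exact absurd h (mul_ne_zero (mul_ne_zero x1ne xsubne) l3ne)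
    · exact h
  subst h3'
  rfl

lemma Phi_surj (m : ℕ) (g : Fin 4 → S) (hg : g ∈ MHomPart (m+3)) : ∃ f, Phi m f = g := by
  rw [MHomPart, Submodule.mem_inf] at hg
  obtain ⟨hgM, hgH'⟩ := hg
  rw [Submodule.mem_pi] at hgH'
  have hgH : ∀ i, (g i).IsHomogeneous (m+3) := fun i => hgH' i (Set.mem_univ i)
  have hgM' : g ∈ M := hgM
  rw [mem_M] at hgM'
  obtain ⟨c1, c2, c3, c4, c5, c6⟩ := hgM'
  obtain ⟨p, hpH, hp⟩ := homog_div homl1 ((hgH 1).sub (hgH 0))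
    (by rw [← neg_sub (g 0) (g 1)]; exact dvd_neg.mpr c1)
  obtain ⟨q, hqH, hq⟩ := homog_div homl2 ((hgH 2).sub (hgH 0))
    (by rw [← neg_sub (g 0) (g 2)]; exact dvd_neg.mpr c2)
  obtain ⟨r, hrH, hr⟩ := homog_div homl3 ((hgH 3).sub (hgH 0))
    (by rw [← neg_sub (g 0) (g 3)]; exact dvd_neg.mpr c3)
  have hpH : p.IsHomogeneous (m+2) := hpH
  have hqH : q.IsHomogeneous (m+2) := hqH
  have hrH : r.IsHomogeneous (m+2) := hrH
  -- step: x ∣ p + q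
  have hdvd_a : (X 0 : S) ∣ (X 1 - X 2) * (p + q) := by
    have hrep : (X 1 - X 2) * (p + q) = (g 1 - g 2) - X 0 * (p - 2*q) := by
      linear_combination hq - hp
    rw [hrep]
    exact dvd_sub c4 (dvd_mul_right _ _)
  obtain ⟨a, haH, ha⟩ := homog_div (isHomogeneous_X ℚ 0) (hpH.add hqH)
    ((primeX0.dvd_or_dvd hdvd_a).resolve_left ndvd1)
  have haH : a.IsHomogeneous (m+1) := haH
  -- step: y ∣ p - r
  have hdvd_b : (X 1 : S) ∣ (X 0 - X 2) * (p - r) := by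
    have hrep : (X 0 - X 2) * (p - r) = (g 1 - g 3) - X 1 * (p + 2*r) := by
      linear_combination hr - hp
    rw [hrep]
    exact dvd_sub c6 (dvd_mul_right _ _)
  obtain ⟨b, hbH, hb⟩ := homog_div (isHomogeneous_X ℚ 1) (hpH.sub hrH)
    ((primeX1.dvd_or_dvd hdvd_b).resolve_left ndvd2)
  have hbH : b.IsHomogeneous (m+1) := hbH
  -- step: x - y ∣ q + r
  have hdvd_qr : (X 0 - X 1 : S) ∣ (X 0 + X 2) * (q + r) := by
    have hrep : (X 0 + X 2) * (q + r) = (g 2 - g 3) - (X 0 - X 1) * (q - 2*r) := by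
      linear_combination hr - hq
    rw [hrep]
    exact dvd_sub c5 (dvd_mul_right _ _)
  have hqr : (X 0 - X 1 : S) ∣ q + r := (primeXsub.dvd_or_dvd hdvd_qr).resolve_left ndvd3
  -- step: x - y ∣ a - b
  have hdvd_c : (X 0 - X 1 : S) ∣ X 0 * (a - b) := by
    have hrep : X 0 * (a - b) = (q + r) - (X 0 - X 1) * b := by
      linear_combination hb - ha
    rw [hrep]
    exact dvd_sub hqr (dvd_mul_right _ _)
  obtain ⟨c, hcH, hc⟩ := homog_div ((isHomogeneous_X ℚ 0).sub (isHomogeneous_X ℚ 1))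
    (haH.sub hbH) ((primeXsub.dvd_or_dvd hdvd_c).resolve_left ndvd4)
  have hcH : c.IsHomogeneous m := hcH
  refine ⟨⟨⟨g 0, hgH 0⟩, ⟨p, hpH⟩, ⟨a, haH⟩, ⟨c, hcH⟩⟩, ?_⟩
  have k0 : g 0 * e0 0 + p * e1 0 + a * e2 0 + c * e3 0 = g 0 := by
    simp
  have k1 : g 0 * e0 1 + p * e1 1 + a * e2 1 + c * e3 1 = g 1 := by
    simp only [e0_1, e1_1, e2_1, e3_1, mul_one, mul_zero, add_zero]
    linear_combination -hp
  have k2 : g 0 * e0 2 + p * e1 2 + a * e2 2 + c * e3 2 = g 2 := by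
    simp only [e0_2, e1_2, e2_2, e3_2, mul_one, mul_zero, add_zero]
    linear_combination -hq - bl2 * ha
  have k3 : g 0 * e0 3 + p * e1 3 + a * e2 3 + c * e3 3 = g 3 := by
    simp only [e0_3, e1_3, e2_3, e3_3, mul_one, mul_zero, add_zero]
    linear_combination -hr + bl3 * hb - X 1 * bl3 * hc
  funext j
  fin_cases j
  exacts [k0, k1, k2, k3]

noncomputable def equivM (m : ℕ) :
    (H (m+3) × H (m+2) × H (m+1) × H m) ≃ₗ[ℚ] MHomPart (m+3) :=
  LinearEquiv.ofBijective ((Phi m).codRestrict (MHomPart (m+3)) (Phi_mem m))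
    ⟨fun f f' hff' => by
      have : Phi m f = Phi m f' := congrArg Subtype.val hff'
      have := Phi_inj m (f - f') (by rw [map_sub, this, sub_self])
      have := sub_eq_zero.mp this
      exact this,
     fun gg => by
      obtain ⟨f, hf⟩ := Phi_surj m gg.1 gg.2
      exact ⟨f, Subtype.ext hf⟩⟩

lemma arith : ∀ m : ℕ,
    (m+5).choose 2 + ((m+4).choose 2 + ((m+3).choose 2 + (m+2).choose 2)) = 2*(m+3)^2+2
  | 0 => by decide
  | (m+1) => by
    have h5 : (m+6).choose 2 = (m+5) + (m+5).choose 2 := by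
      rw [show (m+6).choose 2 = (m+5).choose 1 + (m+5).choose 2 from rfl, Nat.choose_one_right]
    have h4 : (m+5).choose 2 = (m+4) + (m+4).choose 2 := by
      rw [show (m+5).choose 2 = (m+4).choose 1 + (m+4).choose 2 from rfl, Nat.choose_one_right]
    have h3 : (m+4).choose 2 = (m+3) + (m+3).choose 2 := by
      rw [show (m+4).choose 2 = (m+3).choose 1 + (m+3).choose 2 from rfl, Nat.choose_one_right]
    have h2 : (m+3).choose 2 = (m+2) + (m+2).choose 2 := by
      rw [show (m+3).choose 2 = (m+2).choose 1 + (m+2).choose 2 from rfl, Nat.choose_one_right]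
    have ih := arith m
    have hr : 2*(m+1+3)^2+2 = 2*(m+3)^2+2 + (4*m+14) := by ring
    rw [show m+1+5 = m+6 from rfl, show m+1+4 = m+5 from rfl, show m+1+3 = m+4 from rfl,
      show m+1+2 = m+3 from rfl] at *
    rw [h5, h4, h3, h2, hr]
    linarith

instance freeH (n : ℕ) : Module.Free ℚ (homogeneousSubmodule (Fin 3) ℚ n) :=
  Module.Free.of_divisionRing ℚ _

end Aux

set_option maxHeartbeats 1000000 in
set_option synthInstance.maxHeartbeats 400000 in
/-- **Theorem**: the Hilbert polynomial of `M = C^0(Σ)` is `2k² + 2`: for all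
sufficiently large `k`, the space of homogeneous degree-`k` splines on `Σ` has
dimension exactly `2k² + 2`. -/
theorem hilbert_polynomial_symmetric_fan :
    ∃ K : ℕ, ∀ k : ℕ, K ≤ k →
      Module.finrank ℚ (MHomPart k) = 2 * k ^ 2 + 2 := by
  refine ⟨3, fun k hk => ?_⟩
  obtain ⟨m, rfl⟩ : ∃ m, k = m + 3 := ⟨k - 3, by omega⟩
  rw [← (equivM m).finrank_eq]
  have : Module.finrank ℚ (H (m+3) × H (m+2) × H (m+1) × H m)
      = Module.finrank ℚ (H (m+3)) + (Module.finrank ℚ (H (m+2))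
        + (Module.finrank ℚ (H (m+1)) + Module.finrank ℚ (H m))) := by
    rw [Module.finrank_prod, Module.finrank_prod, Module.finrank_prod]
  rw [this]
  show Module.finrank ℚ (homogeneousSubmodule (Fin 3) ℚ (m+3))
      + (Module.finrank ℚ (homogeneousSubmodule (Fin 3) ℚ (m+2))
      + (Module.finrank ℚ (homogeneousSubmodule (Fin 3) ℚ (m+1))
      + Module.finrank ℚ (homogeneousSubmodule (Fin 3) ℚ m))) = 2 * (m+3) ^ 2 + 2
  rw [finrank_H, finrank_H, finrank_H, finrank_H]
  have := arith m
  rw [show m+3+2 = m+5 from rfl, show m+2+2 = m+4 from rfl, show m+1+2 = m+3 from rfl]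
  exact this
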